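/- Let n ≥ 1, w ∈ S_{n+1} and σ ∈ Sym(n). Then the set Ino(w,σ) contains no value w_i that is a left-to-right minimum of w, and contains every value w_i ≥ 2 that is a right-to-left minimum of w. In particular {right-to-left minima of w} \ {1} ⊆ Ino(w,σ) ⊆ {values of w that are not left-to-right minima}. -/

import Mathlib

open scoped Classical

/-- min of the values (in `{1,…,n+1}`, i.e. `(w p).val + 1`) of the block left of bar `σ i`
at step `i+1` (0-indexed step `i`) of the merging process of `(w,σ)`. -/
noncomputable def minL (n : ℕ) (w : Equiv.Perm (Fin (n+1))) (σ : Equiv.Perm (Fin n)) (i : Fin n) : ℕ :=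
  sInf {v : ℕ | ∃ p : Fin (n+1), p.val ≤ (σ i).val ∧
    (∀ j : Fin n, p.val ≤ j.val → j.val < (σ i).val → σ.symm j < i) ∧ v = (w p).val + 1}

/-- min of the values of the block right of bar `σ i` at step `i+1`. -/
noncomputable def minR (n : ℕ) (w : Equiv.Perm (Fin (n+1))) (σ : Equiv.Perm (Fin n)) (i : Fin n) : ℕ :=
  sInf {v : ℕ | ∃ q : Fin (n+1), (σ i).val < q.val ∧
    (∀ j : Fin n, (σ i).val < j.val → j.val < q.val → σ.symm j < i) ∧ v = (w q).val + 1}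

/-- `λ_{i+1}` of the pair `(w,σ)`: `max{min B, min B'}` with positive sign iff `min B < min B'`. -/
noncomputable def lam (n : ℕ) (w : Equiv.Perm (Fin (n+1))) (σ : Equiv.Perm (Fin n)) (i : Fin n) : ℤ :=
  if minL n w σ i < minR n w σ i then (max (minL n w σ i) (minR n w σ i) : ℤ)
  else -(max (minL n w σ i) (minR n w σ i) : ℤ)

/-- `ino(w,σ) = #{i : λ_i > 0}`. -/
noncomputable def ino (n : ℕ) (w : Equiv.Perm (Fin (n+1))) (σ : Equiv.Perm (Fin n)) : ℕ :=
  (Finset.univ.filter fun i : Fin n => 0 < lam n w σ i).card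

/-- `des(σ) = #{i ∈ {1,…,n−1} : σ(i) > σ(i+1)}` (0-indexed). -/
noncomputable def des (n : ℕ) (σ : Equiv.Perm (Fin n)) : ℕ :=
  (Finset.univ.filter fun k : Fin n => ∃ h : k.val + 1 < n, σ ⟨k.val + 1, h⟩ < σ k).card

/-- `asc(λ(w,σ)) = #{i ∈ {1,…,n−1} : λ_i < λ_{i+1}}` (0-indexed). -/
noncomputable def asc (n : ℕ) (w : Equiv.Perm (Fin (n+1))) (σ : Equiv.Perm (Fin n)) : ℕ :=
  (Finset.univ.filter fun k : Fin n => ∃ h : k.val + 1 < n, lam n w σ k < lam n w σ ⟨k.val + 1, h⟩).card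

/-- `Ino(w,σ) = {λ_i : λ_i > 0}` as a finite set of natural numbers. -/
noncomputable def InoSet (n : ℕ) (w : Equiv.Perm (Fin (n+1))) (σ : Equiv.Perm (Fin n)) :
    Finset ℕ :=
  (Finset.univ.filter fun i : Fin n => 0 < lam n w σ i).image fun i => (lam n w σ i).toNat

/-- `w_i` (the value `(w i).val + 1 ∈ {1,…,n+1}`) is a left-to-right minimum of `w`. -/
def IsLtrMin (n : ℕ) (w : Equiv.Perm (Fin (n+1))) (i : Fin (n+1)) : Prop :=
  ∀ j : Fin (n+1), j < i → w i < w j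

/-- `w_i` is a right-to-left minimum of `w`. -/
def IsRtlMin (n : ℕ) (w : Equiv.Perm (Fin (n+1))) (i : Fin (n+1)) : Prop :=
  ∀ j : Fin (n+1), i < j → w i < w j

/-- `Ino(w,σ)` contains no value `w_i` that is a left-to-right minimum of
`w`, and contains every value `w_i ≥ 2` that is a right-to-left minimum of `w`; hence
`{right-to-left minima} ∖ {1} ⊆ Ino(w,σ) ⊆ {values that are not left-to-right minima}`. -/
lemma minL_nonempty (n : ℕ) (w : Equiv.Perm (Fin (n+1))) (σ : Equiv.Perm (Fin n)) (i : Fin n) :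
    {v : ℕ | ∃ p : Fin (n+1), p.val ≤ (σ i).val ∧
      (∀ j : Fin n, p.val ≤ j.val → j.val < (σ i).val → σ.symm j < i) ∧
      v = (w p).val + 1}.Nonempty := by
  refine ⟨(w ((σ i).castSucc)).val + 1, (σ i).castSucc, le_refl _, ?_, rfl⟩
  intro j hj1 hj2
  simp [Fin.coe_castSucc] at hj1
  omega

theorem Ino_between_minima_aux (n : ℕ)
    (w : Equiv.Perm (Fin (n+1))) (σ : Equiv.Perm (Fin n)) :
    (∀ i : Fin (n+1), IsLtrMin n w i → (w i).val + 1 ∉ InoSet n w σ)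
      ∧ (∀ i : Fin (n+1), IsRtlMin n w i → 1 ≤ (w i).val →
          (w i).val + 1 ∈ InoSet n w σ) := by
  constructor
  · -- LTR part
    intro i hi hmem
    rw [InoSet, Finset.mem_image] at hmem
    obtain ⟨k, hk, hval⟩ := hmem
    rw [Finset.mem_filter] at hk
    have hkpos : 0 < lam n w σ k := hk.2
    have hlt : minL n w σ k < minR n w σ k := by
      by_contra h
      rw [lam, if_neg h] at hkpos
      have : (0:ℤ) ≤ (max (minL n w σ k) (minR n w σ k) : ℤ) := by positivity
      omega
    have hlam : lam n w σ k = (minR n w σ k : ℤ) := by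
      rw [lam, if_pos hlt, ← Nat.cast_max, max_eq_right hlt.le]
    have hminR : minR n w σ k = (w i).val + 1 := by
      rw [hlam] at hval; simpa using hval
    -- the set defining minR is nonempty
    set SR := {v : ℕ | ∃ q : Fin (n+1), (σ k).val < q.val ∧
      (∀ j : Fin n, (σ k).val < j.val → j.val < q.val → σ.symm j < k) ∧
      v = (w q).val + 1} with hSR
    have hSRne : SR.Nonempty := by
      rcases Set.eq_empty_or_nonempty SR with he | hne
      · exfalso
        have : minR n w σ k = 0 := by rw [minR, ← hSR, he, Nat.sInf_empty]
        omega
      · exact hne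
    obtain ⟨q, hq1, _, hq3⟩ := Nat.sInf_mem hSRne
    have hqi : q = i := by
      have : (w q).val = (w i).val := by
        have : minR n w σ k = (w q).val + 1 := hq3 ▸ rfl
        omega
      exact w.injective (Fin.ext this)
    subst hqi
    -- minL witness
    obtain ⟨p, hp1, _, hp3⟩ := Nat.sInf_mem (minL_nonempty n w σ k)
    have hpw : (w p).val < (w q).val := by
      have h1 : minL n w σ k = (w p).val + 1 := hp3 ▸ rfl
      omega
    have hpq : p < q := by
      rw [Fin.lt_def]; omega
    have := hi p hpq
    rw [Fin.lt_def] at this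
    omega
  · -- RTL part
    intro i hi hwi
    -- global min is to the left of i, so i.val ≥ 1 and P is nonempty
    have h0 : (w (w.symm 0)) = 0 := w.apply_symm_apply 0
    have hm : w.symm 0 < i := by
      rcases lt_trichotomy (w.symm 0) i with h | h | h
      · exact h
      · exfalso; rw [h] at h0; rw [h0] at hwi; simp at hwi
      · exfalso
        have := hi _ h
        rw [h0, Fin.lt_def] at this
        simp at this
    set P : Finset (Fin (n+1)) := Finset.univ.filter fun p => p < i ∧ w p < w i with hP
    have hPne : P.Nonempty := by
      refine ⟨w.symm 0, ?_⟩
      rw [hP, Finset.mem_filter]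
      refine ⟨Finset.mem_univ _, hm, ?_⟩
      rw [h0, Fin.lt_def]; exact lt_of_lt_of_le (by simp) hwi
    set ps := P.max' hPne with hps
    have hpsP : ps ∈ P := P.max'_mem hPne
    rw [hP, Finset.mem_filter] at hpsP
    have hpsi : ps < i := hpsP.2.1
    have hpsw : w ps < w i := hpsP.2.2
    have hps_max : ∀ p : Fin (n+1), p < i → w p < w i → p ≤ ps := by
      intro p h1 h2
      exact P.le_max' p (by rw [hP, Finset.mem_filter]; exact ⟨Finset.mem_univ _, h1, h2⟩)
    have hin : i.val ≤ n := Nat.lt_succ_iff.mp i.isLt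
    have hpsn : ps.val < n := lt_of_lt_of_le hpsi hin
    -- the set of bars between ps and i
    set J : Finset (Fin n) := Finset.univ.filter fun j : Fin n => ps.val ≤ j.val ∧ j.val < i.val
      with hJ
    have hJne : J.Nonempty := by
      refine ⟨⟨ps.val, hpsn⟩, ?_⟩
      rw [hJ, Finset.mem_filter]
      exact ⟨Finset.mem_univ _, le_refl _, hpsi⟩
    set k := (J.image σ.symm).max' (hJne.image _) with hk
    have hkmem : k ∈ J.image σ.symm := Finset.max'_mem _ _
    rw [Finset.mem_image] at hkmem
    obtain ⟨b, hbJ, hbk⟩ := hkmem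
    have hσk : σ k = b := by rw [← hbk]; simp
    rw [hJ, Finset.mem_filter] at hbJ
    have hb1 : ps.val ≤ b.val := hbJ.2.1
    have hb2 : b.val < i.val := hbJ.2.2
    have hle_k : ∀ j : Fin n, ps.val ≤ j.val → j.val < i.val → σ.symm j ≤ k := by
      intro j h1 h2
      refine Finset.le_max' _ _ ?_
      rw [Finset.mem_image]
      exact ⟨j, by rw [hJ, Finset.mem_filter]; exact ⟨Finset.mem_univ _, h1, h2⟩, rfl⟩
    have hlt_k : ∀ j : Fin n, ps.val ≤ j.val → j.val < i.val → j ≠ b → σ.symm j < k := by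
      intro j h1 h2 h3
      refine lt_of_le_of_ne (hle_k j h1 h2) ?_
      intro he
      exact h3 (by rw [← hσk, ← he]; simp)
    -- compute minR n w σ k = (w i).val + 1
    have hmemR : (w i).val + 1 ∈ {v : ℕ | ∃ q : Fin (n+1), (σ k).val < q.val ∧
        (∀ j : Fin n, (σ k).val < j.val → j.val < q.val → σ.symm j < k) ∧
        v = (w q).val + 1} := by
      refine ⟨i, by rw [hσk]; exact hb2, ?_, rfl⟩
      intro j hj1 hj2
      rw [hσk] at hj1
      refine hlt_k j (by omega) hj2 ?_
      intro he; rw [he] at hj1; omega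
    have hminR : minR n w σ k = (w i).val + 1 := by
      refine le_antisymm (Nat.sInf_le hmemR) ?_
      have hmem := Nat.sInf_mem (⟨_, hmemR⟩ : Set.Nonempty _)
      obtain ⟨q, hq1, _, hq3⟩ := hmem
      rw [hσk] at hq1
      have hq3' : minR n w σ k = (w q).val + 1 := hq3
      rw [hq3']
      rcases lt_trichotomy q i with h | h | h
      · -- q < i with q.val > b.val ≥ ps.val : w q > w i
        by_contra hc
        push_neg at hc
        have hwq : w q < w i := by rw [Fin.lt_def]; omega
        have := hps_max q h hwq
        rw [Fin.le_def] at this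
        omega
      · rw [h]
      · have := hi q h
        rw [Fin.lt_def] at this
        omega
    -- minL n w σ k ≤ (w ps).val + 1
    have hmemL : (w ps).val + 1 ∈ {v : ℕ | ∃ p : Fin (n+1), p.val ≤ (σ k).val ∧
        (∀ j : Fin n, p.val ≤ j.val → j.val < (σ k).val → σ.symm j < k) ∧
        v = (w p).val + 1} := by
      refine ⟨ps, by rw [hσk]; exact hb1, ?_, rfl⟩
      intro j hj1 hj2
      rw [hσk] at hj2
      refine hlt_k j hj1 (by omega) ?_
      intro he; rw [he] at hj2; omega
    have hminL : minL n w σ k ≤ (w ps).val + 1 := Nat.sInf_le hmemL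
    have hlt : minL n w σ k < minR n w σ k := by
      rw [hminR]
      have : (w ps).val < (w i).val := hpsw
      omega
    have hlam : lam n w σ k = ((w i).val + 1 : ℤ) := by
      rw [lam, if_pos hlt, ← Nat.cast_max, max_eq_right hlt.le, hminR]
      push_cast
      ring
    rw [InoSet, Finset.mem_image]
    refine ⟨k, ?_, ?_⟩
    · rw [Finset.mem_filter]
      exact ⟨Finset.mem_univ _, by rw [hlam]; positivity⟩
    · rw [hlam]; simp

theorem Ino_between_minima (n : ℕ) (hn : 1 ≤ n)
    (w : Equiv.Perm (Fin (n+1))) (σ : Equiv.Perm (Fin n)) :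
    (∀ i : Fin (n+1), IsLtrMin n w i → (w i).val + 1 ∉ InoSet n w σ)
      ∧ (∀ i : Fin (n+1), IsRtlMin n w i → 1 ≤ (w i).val →
          (w i).val + 1 ∈ InoSet n w σ) := by
  exact Ino_between_minima_aux n w σ
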